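/- Fix n ≥ 1, Γ ∈ Sym_L(ℝ), z ∈ ℂ with Im z > 0, and a complex nL×nL matrix A with operator norm at most 1. Let V := B^{1/2}. For an L-tuple W = (W^{(1)},…,W^{(L)}) of real symmetric n×n matrices, define the nL×nL matrix H₁(W) := (V⊗I_n)·BlockDiag(√(λ_1/n)·W^{(1)},…,√(λ_L/n)·W^{(L)})·(V⊗I_n) − (VΛV)⊗I_n, and Φ(W) := (1/n)·tr(A·(H₁(W) + Γ⊗I_n − z·I_{nL})^{-1}) (the inverse exists since H₁(W) + Γ⊗I_n is real symmetric and Im z > 0). Then for any two such tuples W, W̄: |Φ(W) − Φ(W̄)| ≤ (‖V‖²·√(L·max_l λ_l) / (n·(Im z)²)) · Σ_{l=1}^L ‖W^{(l)} − W̄^{(l)}‖_F, where ‖V‖ is the operator norm of V and ‖·‖_F is the Frobenius norm. -/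

import Mathlib

open Matrix
open scoped Kronecker

/-- The ℓ²→ℓ² operator norm of a real square matrix. -/
noncomputable def opNormR {m : Type*} [Fintype m] [DecidableEq m] (A : Matrix m m ℝ) : ℝ :=
  ‖Matrix.toEuclideanCLM (𝕜 := ℝ) A‖

/-- The ℓ²→ℓ² operator norm of a complex square matrix. -/
noncomputable def opNormC {m : Type*} [Fintype m] [DecidableEq m] (A : Matrix m m ℂ) : ℝ :=
  ‖Matrix.toEuclideanCLM (𝕜 := ℂ) A‖

/-- The Frobenius norm of a real square matrix. -/
noncomputable def frobNorm {m : Type*} [Fintype m] (A : Matrix m m ℝ) : ℝ :=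
  Real.sqrt (∑ i, ∑ j, (A i j) ^ 2)

/-- The `nL × nL` block-diagonal matrix with `n × n` diagonal blocks `W 0, …, W (L-1)`,
indexed compatibly with the Kronecker product `V ⊗ I_n`. -/
def blockDiagL {L n : ℕ} (W : Fin L → Matrix (Fin n) (Fin n) ℝ) :
    Matrix (Fin L × Fin n) (Fin L × Fin n) ℝ :=
  fun p q => if p.1 = q.1 then W p.1 p.2 q.2 else 0

/-- `H₁(W) := (V ⊗ I_n) · BlockDiag(√(λ_l/n)·W^{(l)}) · (V ⊗ I_n) − (VΛV) ⊗ I_n`. -/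
noncomputable def H1mat {L n : ℕ} (lam : Fin L → ℝ) (V : Matrix (Fin L) (Fin L) ℝ)
    (W : Fin L → Matrix (Fin n) (Fin n) ℝ) :
    Matrix (Fin L × Fin n) (Fin L × Fin n) ℝ :=
  (V ⊗ₖ (1 : Matrix (Fin n) (Fin n) ℝ)) *
      blockDiagL (fun l => Real.sqrt (lam l / n) • W l) *
      (V ⊗ₖ (1 : Matrix (Fin n) (Fin n) ℝ))
    - (V * Matrix.diagonal lam * V) ⊗ₖ (1 : Matrix (Fin n) (Fin n) ℝ)

/-- `Φ(W) := (1/n)·tr(A·(H₁(W) + Γ⊗I_n − z I_{nL})⁻¹)`. -/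
noncomputable def PhiFun {L n : ℕ} (lam : Fin L → ℝ) (V Γ : Matrix (Fin L) (Fin L) ℝ)
    (z : ℂ) (A : Matrix (Fin L × Fin n) (Fin L × Fin n) ℂ)
    (W : Fin L → Matrix (Fin n) (Fin n) ℝ) : ℂ :=
  (1 / (n : ℂ)) *
    Matrix.trace (A *
      ((H1mat lam V W + Γ ⊗ₖ (1 : Matrix (Fin n) (Fin n) ℝ)).map (fun x : ℝ => (x : ℂ))
          - z • (1 : Matrix (Fin L × Fin n) (Fin L × Fin n) ℂ))⁻¹)

/-- The square root of a positive semidefinite matrix, as `Matrix.PosSemidef.sqrt` was defined in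
the older Mathlib (since removed there). -/
noncomputable def Matrix.PosSemidef.sqrt {n : Type*} [Fintype n] [DecidableEq n] {𝕜 : Type*} [RCLike 𝕜]
    [PartialOrder 𝕜] [StarOrderedRing 𝕜]
    {A : Matrix n n 𝕜} (hA : A.PosSemidef) : Matrix n n 𝕜 :=
  hA.1.eigenvectorUnitary.1 * diagonal ((↑) ∘ (√·) ∘ hA.1.eigenvalues) *
    (star hA.1.eigenvectorUnitary : Matrix n n 𝕜)

set_option linter.unusedSectionVars false
set_option linter.unusedVariables false
set_option maxHeartbeats 2000000

section QB
variable {m : Type*} [Fintype m] [DecidableEq m]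

/-- quadratic bound predicate -/
def qb (P : Matrix m m ℂ) (c : ℝ) : Prop :=
  ∀ x : m → ℂ, ∑ i, ‖(P *ᵥ x) i‖ ^ 2 ≤ c ^ 2 * ∑ i, ‖x i‖ ^ 2

lemma norm_mulVec_le {𝕜 : Type*} [RCLike 𝕜] (P : Matrix m m 𝕜) (x : m → 𝕜) :
    Real.sqrt (∑ i, ‖(P *ᵥ x) i‖ ^ 2) ≤
      ‖Matrix.toEuclideanCLM (𝕜 := 𝕜) P‖ * Real.sqrt (∑ i, ‖x i‖ ^ 2) := by
  have h := (Matrix.toEuclideanCLM (𝕜 := 𝕜) P).le_opNorm ((WithLp.equiv 2 (m → 𝕜)).symm x)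
  rw [WithLp.equiv_symm_apply, Matrix.toEuclideanCLM_toLp] at h
  simp only [EuclideanSpace.norm_eq, PiLp.toLp_apply] at h
  exact h

lemma qb_of_opNormC {P : Matrix m m ℂ} {c : ℝ} (hc : opNormC P ≤ c) : qb P c := by
  intro x
  have h := norm_mulVec_le P x
  have h2 : Real.sqrt (∑ i, ‖(P *ᵥ x) i‖ ^ 2) ≤ c * Real.sqrt (∑ i, ‖x i‖ ^ 2) :=
    h.trans (mul_le_mul_of_nonneg_right hc (Real.sqrt_nonneg _))
  have h3 := mul_self_le_mul_self (Real.sqrt_nonneg (∑ i, ‖(P *ᵥ x) i‖ ^ 2)) h2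
  rw [Real.mul_self_sqrt (by positivity)] at h3
  calc ∑ i, ‖(P *ᵥ x) i‖ ^ 2 ≤ (c * Real.sqrt (∑ i, ‖x i‖ ^ 2)) *
        (c * Real.sqrt (∑ i, ‖x i‖ ^ 2)) := h3
    _ = c ^ 2 * (Real.sqrt (∑ i, ‖x i‖ ^ 2) * Real.sqrt (∑ i, ‖x i‖ ^ 2)) := by ring
    _ = c ^ 2 * ∑ i, ‖x i‖ ^ 2 := by rw [Real.mul_self_sqrt (by positivity)]

lemma qbR_of_opNormR {P : Matrix m m ℝ} (x : m → ℝ) :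
    ∑ i, ((P *ᵥ x) i) ^ 2 ≤ (opNormR P) ^ 2 * ∑ i, (x i) ^ 2 := by
  have h := norm_mulVec_le P x
  have h3 := mul_self_le_mul_self (Real.sqrt_nonneg (∑ i, ‖(P *ᵥ x) i‖ ^ 2)) h
  rw [Real.mul_self_sqrt (by positivity)] at h3
  simp only [Real.norm_eq_abs, sq_abs] at h3
  calc ∑ i, ((P *ᵥ x) i) ^ 2 ≤ _ := h3
    _ = (opNormR P) ^ 2 * (Real.sqrt (∑ i, (x i) ^ 2) * Real.sqrt (∑ i, (x i) ^ 2)) := by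
        unfold opNormR; ring
    _ = (opNormR P) ^ 2 * ∑ i, (x i) ^ 2 := by rw [Real.mul_self_sqrt (by positivity)]

lemma qb_mul {P Q : Matrix m m ℂ} {c d : ℝ} (hP : qb P c) (hQ : qb Q d) (hd : 0 ≤ d) :
    qb (P * Q) (c * d) := by
  intro x
  rw [← Matrix.mulVec_mulVec]
  calc ∑ i, ‖(P *ᵥ (Q *ᵥ x)) i‖ ^ 2 ≤ c ^ 2 * ∑ i, ‖(Q *ᵥ x) i‖ ^ 2 := hP _
    _ ≤ c ^ 2 * (d ^ 2 * ∑ i, ‖x i‖ ^ 2) := mul_le_mul_of_nonneg_left (hQ x) (sq_nonneg c)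
    _ = (c * d) ^ 2 * ∑ i, ‖x i‖ ^ 2 := by ring

/-- complexification of a real quadratic bound -/
lemma qb_complexify {M : Matrix m m ℝ} {c : ℝ}
    (h : ∀ y : m → ℝ, ∑ i, ((M *ᵥ y) i) ^ 2 ≤ c ^ 2 * ∑ i, (y i) ^ 2) :
    qb (M.map (fun x : ℝ => (x : ℂ))) c := by
  intro x
  have hre : ∀ i, ((M.map (fun x : ℝ => (x : ℂ)) *ᵥ x) i).re = (M *ᵥ fun j => (x j).re) i := by
    intro i
    simp [Matrix.mulVec, dotProduct, Complex.re_sum, Matrix.map_apply]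
  have him : ∀ i, ((M.map (fun x : ℝ => (x : ℂ)) *ᵥ x) i).im = (M *ᵥ fun j => (x j).im) i := by
    intro i
    simp [Matrix.mulVec, dotProduct, Complex.im_sum, Matrix.map_apply]
  have key : ∀ z : ℂ, ‖z‖ ^ 2 = z.re ^ 2 + z.im ^ 2 := by
    intro z
    rw [Complex.sq_norm, Complex.normSq_apply]
    ring
  calc ∑ i, ‖(M.map (fun x : ℝ => (x : ℂ)) *ᵥ x) i‖ ^ 2
      = ∑ i, (((M *ᵥ fun j => (x j).re) i) ^ 2 + ((M *ᵥ fun j => (x j).im) i) ^ 2) := by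
        refine Finset.sum_congr rfl fun i _ => ?_
        rw [key, hre, him]
    _ = (∑ i, ((M *ᵥ fun j => (x j).re) i) ^ 2) + ∑ i, ((M *ᵥ fun j => (x j).im) i) ^ 2 := by
        rw [Finset.sum_add_distrib]
    _ ≤ (c ^ 2 * ∑ i, ((x i).re) ^ 2) + c ^ 2 * ∑ i, ((x i).im) ^ 2 :=
        add_le_add (h _) (h _)
    _ = c ^ 2 * ∑ i, ‖x i‖ ^ 2 := by
        rw [← mul_add, ← Finset.sum_add_distrib]
        congr 1
        exact (Finset.sum_congr rfl fun i _ => (key _).symm)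

/-- squared Frobenius norm -/
noncomputable def fsq (X : Matrix m m ℂ) : ℝ := ∑ i, ∑ j, ‖X i j‖ ^ 2

lemma fsq_nonneg (X : Matrix m m ℂ) : 0 ≤ fsq X := by
  unfold fsq; positivity

lemma fsq_transpose (X : Matrix m m ℂ) : fsq Xᵀ = fsq X := by
  unfold fsq
  rw [Finset.sum_comm]
  simp [Matrix.transpose_apply]

lemma fsq_mul_left {P : Matrix m m ℂ} {c : ℝ} (h : qb P c) (N : Matrix m m ℂ) :
    fsq (P * N) ≤ c ^ 2 * fsq N := by
  unfold fsq
  rw [Finset.sum_comm]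
  have col : ∀ j, ∑ i, ‖(P * N) i j‖ ^ 2 ≤ c ^ 2 * ∑ i, ‖N i j‖ ^ 2 := by
    intro j
    have := h (fun k => N k j)
    have e : ∀ i, (P *ᵥ fun k => N k j) i = (P * N) i j := by
      intro i; simp [Matrix.mulVec, dotProduct, Matrix.mul_apply]
    calc ∑ i, ‖(P * N) i j‖ ^ 2 = ∑ i, ‖(P *ᵥ fun k => N k j) i‖ ^ 2 := by
          exact Finset.sum_congr rfl fun i _ => by rw [e]
      _ ≤ c ^ 2 * ∑ i, ‖N i j‖ ^ 2 := this
  calc ∑ j, ∑ i, ‖(P * N) i j‖ ^ 2 ≤ ∑ j, c ^ 2 * ∑ i, ‖N i j‖ ^ 2 :=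
        Finset.sum_le_sum fun j _ => col j
    _ = c ^ 2 * ∑ i, ∑ j, ‖N i j‖ ^ 2 := by rw [← Finset.mul_sum, Finset.sum_comm]

lemma fsq_mul_right {P : Matrix m m ℂ} {c : ℝ} (h : qb Pᵀ c) (N : Matrix m m ℂ) :
    fsq (N * P) ≤ c ^ 2 * fsq N := by
  rw [← fsq_transpose (N * P), Matrix.transpose_mul, ← fsq_transpose N]
  exact fsq_mul_left h Nᵀ

lemma fsq_le_card {X : Matrix m m ℂ} {c : ℝ} (h : qb X c) :
    fsq X ≤ (Fintype.card m : ℝ) * c ^ 2 := by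
  unfold fsq
  rw [Finset.sum_comm]
  have col : ∀ j, ∑ i, ‖X i j‖ ^ 2 ≤ c ^ 2 := by
    intro j
    have := h (Pi.single j 1)
    have e : ∀ i, (X *ᵥ Pi.single j 1) i = X i j := by
      intro i; simp [Matrix.mulVec_single]
    have e2 : ∑ i, ‖(Pi.single j 1 : m → ℂ) i‖ ^ 2 = 1 := by
      simp only [Pi.single_apply, apply_ite (fun z : ℂ => ‖z‖ ^ 2), norm_one, norm_zero,
        one_pow, Finset.sum_ite_eq', Finset.mem_univ, if_true]
      norm_num
    calc ∑ i, ‖X i j‖ ^ 2 = ∑ i, ‖(X *ᵥ Pi.single j 1) i‖ ^ 2 :=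
          Finset.sum_congr rfl fun i _ => by rw [e]
      _ ≤ c ^ 2 * ∑ i, ‖(Pi.single j 1 : m → ℂ) i‖ ^ 2 := this
      _ = c ^ 2 := by rw [e2, mul_one]
  calc ∑ j, ∑ i, ‖X i j‖ ^ 2 ≤ ∑ j : m, c ^ 2 := Finset.sum_le_sum fun j _ => col j
    _ = (Fintype.card m : ℝ) * c ^ 2 := by
        rw [Finset.sum_const, Finset.card_univ, nsmul_eq_mul]

/-- Cauchy–Schwarz for the trace -/
lemma abs_trace_mul_le (X Y : Matrix m m ℂ) :
    ‖(X * Y).trace‖ ≤ Real.sqrt (fsq X) * Real.sqrt (fsq Y) := by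
  have e : (X * Y).trace = ∑ p : m × m, X p.1 p.2 * Y p.2 p.1 := by
    rw [Matrix.trace, Fintype.sum_prod_type]
    simp [Matrix.diag, Matrix.mul_apply]
  rw [e]
  calc ‖∑ p : m × m, X p.1 p.2 * Y p.2 p.1‖
      ≤ ∑ p : m × m, ‖X p.1 p.2‖ * ‖Y p.2 p.1‖ := by
        refine (norm_sum_le _ _).trans ?_
        exact Finset.sum_le_sum fun p _ => le_of_eq (norm_mul _ _)
    _ ≤ Real.sqrt (∑ p : m × m, ‖X p.1 p.2‖ ^ 2) *
          Real.sqrt (∑ p : m × m, ‖Y p.2 p.1‖ ^ 2) :=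
        Real.sum_mul_le_sqrt_mul_sqrt _ _ _
    _ = Real.sqrt (fsq X) * Real.sqrt (fsq Y) := by
        congr 1
        · congr 1; rw [fsq, Fintype.sum_prod_type]
        · congr 1
          rw [fsq, Fintype.sum_prod_type, Finset.sum_comm]

lemma qb_unitary {U : Matrix m m ℂ} (hU : star U * U = 1) : qb U 1 := by
  intro x
  set T := Matrix.toEuclideanCLM (𝕜 := ℂ) U with hT
  set y : EuclideanSpace ℂ m := (WithLp.equiv 2 (m → ℂ)).symm x with hy
  have h1 : (inner ℂ (T y) (T y) : ℂ) = inner ℂ y y := by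
    have h3 : ContinuousLinearMap.adjoint T = Matrix.toEuclideanCLM (𝕜 := ℂ) (star U) := by
      rw [map_star]
      exact (ContinuousLinearMap.star_eq_adjoint _).symm
    have h2 : (ContinuousLinearMap.adjoint T) (T y) = y := by
      rw [h3]
      have h4 : Matrix.toEuclideanCLM (𝕜 := ℂ) (star U) (Matrix.toEuclideanCLM (𝕜 := ℂ) U y)
          = Matrix.toEuclideanCLM (𝕜 := ℂ) (star U * U) y := by
        rw [_root_.map_mul]; rfl
      rw [hT, h4, hU, _root_.map_one]; rfl
    rw [← ContinuousLinearMap.adjoint_inner_left, h2]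
  have h5 : ‖T y‖ ^ 2 = ‖y‖ ^ 2 := by
    rw [← inner_self_eq_norm_sq (𝕜 := ℂ), ← inner_self_eq_norm_sq (𝕜 := ℂ), h1]
  have hTy : ‖T y‖ ^ 2 = ∑ i, ‖(U *ᵥ x) i‖ ^ 2 := by
    rw [hT, hy, WithLp.equiv_symm_apply, Matrix.toEuclideanCLM_toLp]
    rw [EuclideanSpace.norm_eq]
    rw [Real.sq_sqrt (by positivity)]
  have hyx : ‖y‖ ^ 2 = ∑ i, ‖x i‖ ^ 2 := by
    rw [hy, EuclideanSpace.norm_eq, Real.sq_sqrt (by positivity)]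
    rfl
  rw [one_pow, one_mul, ← hTy, ← hyx, h5]

lemma qb_diagonal {d : m → ℂ} {c : ℝ} (hd : ∀ i, ‖d i‖ ≤ c) : qb (Matrix.diagonal d) c := by
  intro x
  have e : ∀ i, (Matrix.diagonal d *ᵥ x) i = d i * x i := fun i =>
    Matrix.mulVec_diagonal d x i
  calc ∑ i, ‖(Matrix.diagonal d *ᵥ x) i‖ ^ 2 = ∑ i, ‖d i‖ ^ 2 * ‖x i‖ ^ 2 := by
        refine Finset.sum_congr rfl fun i _ => ?_
        rw [e, norm_mul, mul_pow]
    _ ≤ ∑ i, c ^ 2 * ‖x i‖ ^ 2 := by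
        refine Finset.sum_le_sum fun i _ => ?_
        have : ‖d i‖ ^ 2 ≤ c ^ 2 := pow_le_pow_left₀ (norm_nonneg _) (hd i) 2
        exact mul_le_mul_of_nonneg_right this (by positivity)
    _ = c ^ 2 * ∑ i, ‖x i‖ ^ 2 := by rw [← Finset.mul_sum]

/-- resolvent of a real symmetric matrix -/
lemma resolvent_exists (S : Matrix m m ℝ) (hS : Sᵀ = S) (z : ℂ) (hz : 0 < z.im) :
    ∃ R : Matrix m m ℂ,
      (S.map (fun x : ℝ => (x : ℂ)) - z • 1) * R = 1 ∧
      R * (S.map (fun x : ℝ => (x : ℂ)) - z • 1) = 1 ∧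
      qb R (1 / z.im) ∧
      (S.map (fun x : ℝ => (x : ℂ)) - z • 1)⁻¹ = R := by
  set Mc : Matrix m m ℂ := S.map (fun x : ℝ => (x : ℂ)) with hMc
  have hHerm : Mc.IsHermitian := by
    rw [Matrix.IsHermitian]
    ext i j
    simp only [Matrix.conjTranspose_apply, hMc, Matrix.map_apply, RCLike.star_def,
      Complex.conj_ofReal]
    norm_cast
    exact congrFun (congrFun hS i) j
  set U : Matrix m m ℂ := (Matrix.IsHermitian.eigenvectorUnitary hHerm : Matrix m m ℂ) with hUdef
  set ev : m → ℝ := hHerm.eigenvalues with hev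
  have hU1 : star U * U = 1 :=
    (Matrix.mem_unitaryGroup_iff').mp (Matrix.IsHermitian.eigenvectorUnitary hHerm).2
  have hU2 : U * star U = 1 :=
    (Matrix.mem_unitaryGroup_iff).mp (Matrix.IsHermitian.eigenvectorUnitary hHerm).2
  set d : m → ℂ := fun i => (ev i : ℂ) - z with hd
  have hdne : ∀ i, d i ≠ 0 := by
    intro i h
    have : (d i).im = 0 := by rw [h]; rfl
    simp only [hd, Complex.sub_im, Complex.ofReal_im, zero_sub, neg_eq_zero] at this
    exact absurd this (by positivity)
  have hdiag : Matrix.diagonal d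
      = Matrix.diagonal ((fun r : ℝ => (r : ℂ)) ∘ ev) - z • 1 := by
    ext i j
    by_cases h : i = j
    · subst h; simp [hd, Matrix.one_apply, Matrix.diagonal_apply]
    · simp [hd, Matrix.one_apply_ne h, Matrix.diagonal_apply_ne _ h]
  have hspec : Mc = U * Matrix.diagonal ((fun r : ℝ => (r : ℂ)) ∘ ev) * star U :=
    hHerm.spectral_theorem
  have hM : Mc - z • 1 = U * Matrix.diagonal d * star U := by
    rw [hdiag, Matrix.mul_sub, Matrix.sub_mul, ← hspec]
    congr 1
    rw [Matrix.mul_smul, Matrix.smul_mul, mul_one, hU2]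
  set R : Matrix m m ℂ := U * Matrix.diagonal (fun i => (d i)⁻¹) * star U with hR
  have hdd : Matrix.diagonal d * Matrix.diagonal (fun i => (d i)⁻¹) = 1 := by
    rw [Matrix.diagonal_mul_diagonal]
    rw [show (fun i => d i * (d i)⁻¹) = fun _ => (1:ℂ) from funext fun i =>
      mul_inv_cancel₀ (hdne i), Matrix.diagonal_one]
  have hdd' : Matrix.diagonal (fun i => (d i)⁻¹) * Matrix.diagonal d = 1 := by
    rw [Matrix.diagonal_mul_diagonal]
    rw [show (fun i => (d i)⁻¹ * d i) = fun _ => (1:ℂ) from funext fun i =>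
      inv_mul_cancel₀ (hdne i), Matrix.diagonal_one]
  have key : ∀ D E : Matrix m m ℂ, D * E = 1 →
      (U * D * star U) * (U * E * star U) = 1 := by
    intro D E hDE
    calc (U * D * star U) * (U * E * star U)
        = U * (D * ((star U * U) * (E * star U))) := by
          simp only [Matrix.mul_assoc]
      _ = U * (D * (E * star U)) := by rw [hU1, Matrix.one_mul]
      _ = U * ((D * E) * star U) := by rw [Matrix.mul_assoc]
      _ = U * star U := by rw [hDE, Matrix.one_mul]
      _ = 1 := hU2
  have h1 : (Mc - z • 1) * R = 1 := by
    rw [hM, hR]; exact key _ _ hdd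
  have h2 : R * (Mc - z • 1) = 1 := by
    rw [hM, hR]; exact key _ _ hdd'
  have hqb : qb R (1 / z.im) := by
    have hbound : ∀ i, ‖(d i)⁻¹‖ ≤ 1 / z.im := by
      intro i
      rw [norm_inv, one_div]
      have him : z.im ≤ ‖d i‖ := by
        have h3 : |(d i).im| ≤ ‖d i‖ := Complex.abs_im_le_norm _
        have h4 : (d i).im = -z.im := by simp [hd]
        calc z.im ≤ |(d i).im| := by rw [h4, abs_neg, abs_of_pos hz]
          _ ≤ _ := h3
      exact inv_anti₀ hz him
    have q1 : qb U 1 := qb_unitary hU1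
    have q2 : qb (star U) 1 := qb_unitary (by rw [star_star]; exact hU2)
    have q3 : qb (Matrix.diagonal (fun i => (d i)⁻¹)) (1 / z.im) := qb_diagonal hbound
    have := qb_mul (qb_mul q1 q3 (by positivity)) q2 zero_le_one
    simpa using this
  exact ⟨R, h1, h2, hqb, Matrix.inv_eq_right_inv h1⟩

end QB

section Kron
variable {L n : ℕ}

lemma kron_mulVec (V : Matrix (Fin L) (Fin L) ℝ) (x : Fin L × Fin n → ℂ) (l : Fin L) (i : Fin n) :
    (((V ⊗ₖ (1 : Matrix (Fin n) (Fin n) ℝ)).map (fun x : ℝ => (x : ℂ))) *ᵥ x) (l, i)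
      = ((V.map (fun x : ℝ => (x : ℂ))) *ᵥ fun l' => x (l', i)) l := by
  simp only [Matrix.mulVec, dotProduct, Matrix.map_apply, Matrix.kroneckerMap_apply,
    Fintype.sum_prod_type, Matrix.one_apply]
  refine Finset.sum_congr rfl fun l' _ => ?_
  simp [apply_ite (fun r : ℝ => (r : ℂ)), mul_ite, ite_mul]

lemma qb_kron {V : Matrix (Fin L) (Fin L) ℝ} {c : ℝ}
    (h : qb (V.map (fun x : ℝ => (x : ℂ))) c) :
    qb ((V ⊗ₖ (1 : Matrix (Fin n) (Fin n) ℝ)).map (fun x : ℝ => (x : ℂ))) c := by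
  intro x
  calc ∑ p : Fin L × Fin n, ‖(((V ⊗ₖ (1 : Matrix (Fin n) (Fin n) ℝ)).map
        (fun x : ℝ => (x : ℂ))) *ᵥ x) p‖ ^ 2
      = ∑ i : Fin n, ∑ l : Fin L, ‖((V.map (fun x : ℝ => (x : ℂ))) *ᵥ fun l' => x (l', i)) l‖ ^ 2 := by
        rw [Fintype.sum_prod_type, Finset.sum_comm]
        exact Finset.sum_congr rfl fun i _ => Finset.sum_congr rfl fun l _ => by
          rw [kron_mulVec]
    _ ≤ ∑ i : Fin n, c ^ 2 * ∑ l : Fin L, ‖x (l, i)‖ ^ 2 :=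
        Finset.sum_le_sum fun i _ => h _
    _ = c ^ 2 * ∑ p : Fin L × Fin n, ‖x p‖ ^ 2 := by
        rw [← Finset.mul_sum, Fintype.sum_prod_type, Finset.sum_comm]

end Kron


section Sym
variable {L n : ℕ}

lemma one_sym (i j : Fin n) :
    (1 : Matrix (Fin n) (Fin n) ℝ) i j = (1 : Matrix (Fin n) (Fin n) ℝ) j i := by
  by_cases h : i = j
  · subst h; rfl
  · rw [Matrix.one_apply_ne h, Matrix.one_apply_ne (Ne.symm h)]

lemma kron_one_sym (M : Matrix (Fin L) (Fin L) ℝ) (hM : Mᵀ = M) :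
    (M ⊗ₖ (1 : Matrix (Fin n) (Fin n) ℝ))ᵀ = M ⊗ₖ (1 : Matrix (Fin n) (Fin n) ℝ) := by
  ext ⟨a, i⟩ ⟨b, j⟩
  simp only [Matrix.transpose_apply, Matrix.kroneckerMap_apply]
  have h1 := congrFun (congrFun hM a) b
  simp only [Matrix.transpose_apply] at h1
  rw [h1, one_sym j i]

lemma blockDiagL_sym (f : Fin L → Matrix (Fin n) (Fin n) ℝ) (hf : ∀ l, (f l)ᵀ = f l) :
    (blockDiagL f)ᵀ = blockDiagL f := by
  ext ⟨a, i⟩ ⟨b, j⟩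
  show (if b = a then f b j i else 0) = (if a = b then f a i j else 0)
  by_cases h : a = b
  · subst h
    rw [if_pos rfl, if_pos rfl]
    have := congrFun (congrFun (hf a) i) j
    simpa using this
  · rw [if_neg (Ne.symm h), if_neg h]

lemma H1_sym (lam : Fin L → ℝ) (V : Matrix (Fin L) (Fin L) ℝ) (hVsym : Vᵀ = V)
    (Γ : Matrix (Fin L) (Fin L) ℝ) (hΓ : Γᵀ = Γ)
    (Wf : Fin L → Matrix (Fin n) (Fin n) ℝ) (hWf : ∀ l, (Wf l)ᵀ = Wf l) :
    (H1mat lam V Wf + Γ ⊗ₖ (1 : Matrix (Fin n) (Fin n) ℝ))ᵀ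
      = H1mat lam V Wf + Γ ⊗ₖ (1 : Matrix (Fin n) (Fin n) ℝ) := by
  have hΔ : (blockDiagL (fun l => Real.sqrt (lam l / n) • Wf l))ᵀ
      = blockDiagL (fun l => Real.sqrt (lam l / n) • Wf l) :=
    blockDiagL_sym _ (fun l => by rw [Matrix.transpose_smul, hWf l])
  have hVLV : (V * Matrix.diagonal lam * V)ᵀ = V * Matrix.diagonal lam * V := by
    rw [Matrix.transpose_mul, Matrix.transpose_mul, Matrix.diagonal_transpose, hVsym,
      Matrix.mul_assoc]
  have hP : (V ⊗ₖ (1 : Matrix (Fin n) (Fin n) ℝ))ᵀ = V ⊗ₖ (1 : Matrix (Fin n) (Fin n) ℝ) :=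
    kron_one_sym V hVsym
  unfold H1mat
  rw [Matrix.transpose_add, Matrix.transpose_sub, Matrix.transpose_mul, Matrix.transpose_mul,
    hP, hΔ, kron_one_sym _ hVLV, kron_one_sym Γ hΓ, ← Matrix.mul_assoc]

lemma H1_diff (lam : Fin L → ℝ) (V : Matrix (Fin L) (Fin L) ℝ)
    (Γ : Matrix (Fin L) (Fin L) ℝ) (W W' : Fin L → Matrix (Fin n) (Fin n) ℝ) :
    (H1mat lam V W' + Γ ⊗ₖ (1 : Matrix (Fin n) (Fin n) ℝ))
        - (H1mat lam V W + Γ ⊗ₖ (1 : Matrix (Fin n) (Fin n) ℝ))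
      = (V ⊗ₖ (1 : Matrix (Fin n) (Fin n) ℝ)) *
          blockDiagL (fun l => Real.sqrt (lam l / n) • (W' l - W l)) *
          (V ⊗ₖ (1 : Matrix (Fin n) (Fin n) ℝ)) := by
  have hΔ : blockDiagL (fun l => Real.sqrt (lam l / n) • (W' l - W l))
      = blockDiagL (fun l => Real.sqrt (lam l / n) • W' l)
        - blockDiagL (fun l => Real.sqrt (lam l / n) • W l) := by
    ext ⟨a, i⟩ ⟨b, j⟩
    simp only [blockDiagL, Matrix.sub_apply]
    by_cases h : a = b
    · rw [if_pos h, if_pos h, if_pos h]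
      simp only [Matrix.smul_apply, Matrix.sub_apply, smul_eq_mul]
      ring
    · rw [if_neg h, if_neg h, if_neg h, sub_zero]
  unfold H1mat
  rw [hΔ, Matrix.mul_sub, Matrix.sub_mul]
  abel

lemma mapC_mul {m : Type*} [Fintype m] (M N : Matrix m m ℝ) :
    (M * N).map (fun x : ℝ => (x : ℂ))
      = M.map (fun x : ℝ => (x : ℂ)) * N.map (fun x : ℝ => (x : ℂ)) := by
  ext i j
  simp only [Matrix.map_apply, Matrix.mul_apply]
  push_cast
  rfl

lemma mapC_sub {m : Type*} (M N : Matrix m m ℝ) :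
    (M - N).map (fun x : ℝ => (x : ℂ))
      = M.map (fun x : ℝ => (x : ℂ)) - N.map (fun x : ℝ => (x : ℂ)) := by
  ext i j
  simp only [Matrix.map_apply, Matrix.sub_apply]
  push_cast
  ring

end Sym

/-- Lipschitz bound for the tested resolvent trace
`|Φ(W) − Φ(W̄)| ≤ (‖V‖²·√(L·max_l λ_l) / (n·(Im z)²)) · Σ_l ‖W^{(l)} − W̄^{(l)}‖_F`. -/
theorem stmt18 {L n : ℕ} (hL : 0 < L) (hn : 0 < n)
    (lam : Fin L → ℝ) (hlam : ∀ l, 0 < lam l)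
    (B : Matrix (Fin L) (Fin L) ℝ) (hB : B.PosDef) (hBdiag : ∀ l, B l l = 1)
    (V : Matrix (Fin L) (Fin L) ℝ) (hV : V = hB.posSemidef.sqrt)
    (Γ : Matrix (Fin L) (Fin L) ℝ) (hΓ : Γᵀ = Γ)
    (z : ℂ) (hz : 0 < z.im)
    (A : Matrix (Fin L × Fin n) (Fin L × Fin n) ℂ) (hA : opNormC A ≤ 1)
    (W W' : Fin L → Matrix (Fin n) (Fin n) ℝ)
    (hW : ∀ l, (W l)ᵀ = W l) (hW' : ∀ l, (W' l)ᵀ = W' l) :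
    ‖PhiFun lam V Γ z A W - PhiFun lam V Γ z A W'‖
      ≤ opNormR V ^ 2 *
          Real.sqrt (L * Finset.univ.sup' ⟨⟨0, hL⟩, Finset.mem_univ _⟩ lam)
          / (n * z.im ^ 2) *
        ∑ l, frobNorm (W l - W' l) := by
  classical
  have hnR : (0:ℝ) < n := by exact_mod_cast hn
  set mx : ℝ := Finset.univ.sup' ⟨⟨0, hL⟩, Finset.mem_univ _⟩ lam with hmx
  have hmxpos : 0 < mx :=
    lt_of_lt_of_le (hlam ⟨0, hL⟩) (Finset.le_sup' lam (Finset.mem_univ _))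
  have hmxle : ∀ l, lam l ≤ mx := fun l => Finset.le_sup' lam (Finset.mem_univ l)
  have hVsym : Vᵀ = V := by
    rw [hV]
    have h : (hB.posSemidef.sqrt).IsHermitian := by
      unfold Matrix.PosSemidef.sqrt
      exact isHermitian_mul_mul_conjTranspose _ (isHermitian_diagonal _)
    rw [Matrix.IsHermitian, Matrix.conjTranspose_eq_transpose_of_trivial] at h
    exact h
  obtain ⟨R, hR1, hR2, hRqb, hRinv⟩ :=
    resolvent_exists (H1mat lam V W + Γ ⊗ₖ (1 : Matrix (Fin n) (Fin n) ℝ))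
      (H1_sym lam V hVsym Γ hΓ W hW) z hz
  obtain ⟨R', hR1', hR2', hRqb', hRinv'⟩ :=
    resolvent_exists (H1mat lam V W' + Γ ⊗ₖ (1 : Matrix (Fin n) (Fin n) ℝ))
      (H1_sym lam V hVsym Γ hΓ W' hW') z hz
  set Mc : Matrix (Fin L × Fin n) (Fin L × Fin n) ℂ :=
    (H1mat lam V W + Γ ⊗ₖ (1 : Matrix (Fin n) (Fin n) ℝ)).map (fun x : ℝ => (x : ℂ))
      - z • 1 with hMcdef
  set Mc' : Matrix (Fin L × Fin n) (Fin L × Fin n) ℂ :=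
    (H1mat lam V W' + Γ ⊗ₖ (1 : Matrix (Fin n) (Fin n) ℝ)).map (fun x : ℝ => (x : ℂ))
      - z • 1 with hMcdef'
  set Δd : Matrix (Fin L × Fin n) (Fin L × Fin n) ℝ :=
    blockDiagL (fun l => Real.sqrt (lam l / n) • (W' l - W l)) with hΔddef
  set Pc : Matrix (Fin L × Fin n) (Fin L × Fin n) ℂ :=
    (V ⊗ₖ (1 : Matrix (Fin n) (Fin n) ℝ)).map (fun x : ℝ => (x : ℂ)) with hPcdef
  set Δc : Matrix (Fin L × Fin n) (Fin L × Fin n) ℂ :=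
    Δd.map (fun x : ℝ => (x : ℂ)) with hΔcdef
  set Dc : Matrix (Fin L × Fin n) (Fin L × Fin n) ℂ := Pc * Δc * Pc with hDcdef
  -- the difference of the complexified matrices
  have hMcdiff : Mc' - Mc = Dc := by
    rw [hMcdef, hMcdef']
    have e0 : ∀ X Y : Matrix (Fin L × Fin n) (Fin L × Fin n) ℂ,
        (X - z • 1) - (Y - z • 1) = X - Y := fun X Y => by abel
    rw [e0, ← mapC_sub, H1_diff lam V Γ W W']
    rw [mapC_mul, mapC_mul]
  -- difference of resolvents
  have hRdiff : R - R' = R * Dc * R' := by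
    rw [← hMcdiff]
    have e5 : R * (Mc' - Mc) * R' = R * (Mc' * R') - (R * Mc) * R' := by noncomm_ring
    rw [e5, hR1', hR2, Matrix.mul_one, Matrix.one_mul]
  -- Φ difference as a trace
  have hPhi : PhiFun lam V Γ z A W - PhiFun lam V Γ z A W'
      = (1 / (n : ℂ)) * ((R' * (A * R)) * Dc).trace := by
    unfold PhiFun
    rw [show ((H1mat lam V W + Γ ⊗ₖ (1 : Matrix (Fin n) (Fin n) ℝ)).map
        (fun x : ℝ => (x : ℂ)) - z • 1)⁻¹ = R from hRinv]
    rw [show ((H1mat lam V W' + Γ ⊗ₖ (1 : Matrix (Fin n) (Fin n) ℝ)).map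
        (fun x : ℝ => (x : ℂ)) - z • 1)⁻¹ = R' from hRinv']
    have e3 : (A * R).trace - (A * R').trace = ((R' * (A * R)) * Dc).trace := by
      rw [← Matrix.trace_sub, ← Matrix.mul_sub, hRdiff]
      have e4 : A * (R * Dc * R') = ((A * (R * Dc)) * R') := by noncomm_ring
      rw [e4, Matrix.trace_mul_comm]
      congr 1
      noncomm_ring
    rw [← e3]
    ring
  -- quadratic bounds
  have qX : qb (R' * (A * R)) ((1 / z.im) * (1 * (1 / z.im))) :=
    qb_mul hRqb' (qb_mul (qb_of_opNormC hA) hRqb (by positivity)) (by positivity)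
  have hfsqX : fsq (R' * (A * R)) ≤ ((L : ℝ) * n) * ((1 / z.im) * (1 * (1 / z.im))) ^ 2 := by
    have h := fsq_le_card qX
    have hcard : (Fintype.card (Fin L × Fin n) : ℝ) = (L : ℝ) * n := by
      simp [Fintype.card_prod]
    rwa [hcard] at h
  have qV : qb (V.map (fun x : ℝ => (x : ℂ))) (opNormR V) :=
    qb_complexify (fun y => qbR_of_opNormR y)
  have qP : qb Pc (opNormR V) := by rw [hPcdef]; exact qb_kron qV
  have hPcT : Pcᵀ = Pc := by
    rw [hPcdef, ← Matrix.transpose_map, kron_one_sym V hVsym]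
  have qPT : qb Pcᵀ (opNormR V) := by rw [hPcT]; exact qP
  have hfsqDc : fsq Dc ≤ (opNormR V) ^ 2 * ((opNormR V) ^ 2 * fsq Δc) := by
    have h1 : fsq (Δc * Pc) ≤ (opNormR V) ^ 2 * fsq Δc := fsq_mul_right qPT Δc
    have h2 : fsq (Pc * (Δc * Pc)) ≤ (opNormR V) ^ 2 * fsq (Δc * Pc) := fsq_mul_left qP _
    have e : Dc = Pc * (Δc * Pc) := by rw [hDcdef, Matrix.mul_assoc]
    rw [e]
    exact h2.trans (mul_le_mul_of_nonneg_left h1 (sq_nonneg _))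
  -- explicit form of fsq Δc
  have hflnn : ∀ l, (0:ℝ) ≤ ∑ i, ∑ j, ((W l - W' l) i j) ^ 2 := fun l => by positivity
  have hfsqΔ : fsq Δc = ∑ l, (lam l / n) * ∑ i, ∑ j, ((W l - W' l) i j) ^ 2 := by
    rw [hΔcdef, hΔddef]
    unfold fsq
    rw [Fintype.sum_prod_type]
    have ecol : ∀ (a : Fin L) (i : Fin n),
        (∑ q : Fin L × Fin n, ‖((blockDiagL (fun l => Real.sqrt (lam l / n) • (W' l - W l))).map
            (fun x : ℝ => (x : ℂ))) (a, i) q‖ ^ 2)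
          = (lam a / n) * ∑ j, ((W a - W' a) i j) ^ 2 := by
      intro a i
      rw [Fintype.sum_prod_type]
      have hb : ∀ b : Fin L,
          (∑ j, ‖((blockDiagL (fun l => Real.sqrt (lam l / n) • (W' l - W l))).map
              (fun x : ℝ => (x : ℂ))) (a, i) (b, j)‖ ^ 2)
            = if a = b then (lam a / n) * ∑ j, ((W a - W' a) i j) ^ 2 else 0 := by
        intro b
        by_cases h : a = b
        · subst h
          rw [if_pos rfl]
          have hterm : ∀ j : Fin n,
              ‖((blockDiagL (fun l => Real.sqrt (lam l / n) • (W' l - W l))).map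
                (fun x : ℝ => (x : ℂ))) (a, i) (a, j)‖ ^ 2
              = (lam a / n) * ((W a - W' a) i j) ^ 2 := by
            intro j
            have hentry : ((blockDiagL (fun l => Real.sqrt (lam l / n) • (W' l - W l))).map
                (fun x : ℝ => (x : ℂ))) (a, i) (a, j)
                = ((Real.sqrt (lam a / n) * ((W' a - W a) i j) : ℝ) : ℂ) := by
              simp [Matrix.map_apply, blockDiagL]
            rw [hentry]
            rw [Complex.norm_real, Real.norm_eq_abs, sq_abs, mul_pow,
              Real.sq_sqrt (div_nonneg (hlam a).le hnR.le)]
            have he : (W' a - W a) i j = -((W a - W' a) i j) := by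
              rw [Matrix.sub_apply, Matrix.sub_apply, neg_sub]
            rw [he, neg_sq]
          rw [Finset.sum_congr rfl (fun j _ => hterm j), ← Finset.mul_sum]
        · rw [if_neg h]
          refine Finset.sum_eq_zero fun j _ => ?_
          have hentry : ((blockDiagL (fun l => Real.sqrt (lam l / n) • (W' l - W l))).map
              (fun x : ℝ => (x : ℂ))) (a, i) (b, j) = 0 := by
            simp [Matrix.map_apply, blockDiagL, h]
          rw [hentry]
          simp
      rw [Finset.sum_congr rfl (fun b _ => hb b)]
      simp
    calc (∑ a : Fin L, ∑ i : Fin n, ∑ q : Fin L × Fin n,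
          ‖((blockDiagL (fun l => Real.sqrt (lam l / n) • (W' l - W l))).map
            (fun x : ℝ => (x : ℂ))) (a, i) q‖ ^ 2)
        = ∑ a : Fin L, ∑ i : Fin n, (lam a / n) * ∑ j, ((W a - W' a) i j) ^ 2 :=
          Finset.sum_congr rfl fun a _ => Finset.sum_congr rfl fun i _ => ecol a i
      _ = ∑ l, (lam l / n) * ∑ i, ∑ j, ((W l - W' l) i j) ^ 2 := by
          refine Finset.sum_congr rfl fun a _ => ?_
          rw [← Finset.mul_sum]
  have hfsqΔle : fsq Δc ≤ (mx / n) * ∑ l, ∑ i, ∑ j, ((W l - W' l) i j) ^ 2 := by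
    rw [hfsqΔ, Finset.mul_sum]
    refine Finset.sum_le_sum fun l _ => ?_
    refine mul_le_mul_of_nonneg_right ?_ (hflnn l)
    gcongr
    exact hmxle l
  -- square roots
  have hcX : (0:ℝ) ≤ (1 / z.im) * (1 * (1 / z.im)) := by
    have h0 : (0:ℝ) ≤ 1 / z.im := one_div_nonneg.mpr hz.le
    exact mul_nonneg h0 (by rw [one_mul]; exact h0)
  have hsX : Real.sqrt (fsq (R' * (A * R)))
      ≤ Real.sqrt ((L : ℝ) * n) * ((1 / z.im) * (1 * (1 / z.im))) := by
    refine (Real.sqrt_le_sqrt hfsqX).trans ?_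
    rw [Real.sqrt_mul (by positivity), Real.sqrt_sq hcX]
  have hfrobnn : ∀ l, (0:ℝ) ≤ frobNorm (W l - W' l) := fun l => Real.sqrt_nonneg _
  have hsum_sqrt : Real.sqrt (∑ l, ∑ i, ∑ j, ((W l - W' l) i j) ^ 2)
      ≤ ∑ l, frobNorm (W l - W' l) := by
    have h1 : (∑ l, ∑ i, ∑ j, ((W l - W' l) i j) ^ 2)
        ≤ (∑ l, frobNorm (W l - W' l)) ^ 2 := by
      have e : ∀ l, (∑ i, ∑ j, ((W l - W' l) i j) ^ 2) = (frobNorm (W l - W' l)) ^ 2 :=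
        fun l => by rw [frobNorm, Real.sq_sqrt (hflnn l)]
      calc (∑ l, ∑ i, ∑ j, ((W l - W' l) i j) ^ 2)
          = ∑ l, (frobNorm (W l - W' l)) ^ 2 := Finset.sum_congr rfl fun l _ => e l
        _ ≤ (∑ l, frobNorm (W l - W' l)) ^ 2 :=
            Finset.sum_sq_le_sq_sum_of_nonneg (fun l _ => hfrobnn l)
    refine (Real.sqrt_le_sqrt h1).trans ?_
    rw [Real.sqrt_sq (Finset.sum_nonneg fun l _ => hfrobnn l)]
  have hsD : Real.sqrt (fsq Dc)
      ≤ (opNormR V) ^ 2 * (Real.sqrt (mx / n) * ∑ l, frobNorm (W l - W' l)) := by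
    have h2 : fsq Dc ≤ ((opNormR V) ^ 2) ^ 2 *
        ((mx / n) * ∑ l, ∑ i, ∑ j, ((W l - W' l) i j) ^ 2) := by
      refine hfsqDc.trans ?_
      rw [show ((opNormR V) ^ 2) ^ 2 * ((mx / n) * ∑ l, ∑ i, ∑ j, ((W l - W' l) i j) ^ 2)
          = (opNormR V) ^ 2 * ((opNormR V) ^ 2 *
            ((mx / n) * ∑ l, ∑ i, ∑ j, ((W l - W' l) i j) ^ 2)) by ring]
      exact mul_le_mul_of_nonneg_left
        (mul_le_mul_of_nonneg_left hfsqΔle (sq_nonneg _)) (sq_nonneg _)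
    refine (Real.sqrt_le_sqrt h2).trans ?_
    rw [Real.sqrt_mul (by positivity), Real.sqrt_sq (sq_nonneg _),
      Real.sqrt_mul (div_nonneg hmxpos.le hnR.le)]
    exact mul_le_mul_of_nonneg_left
      (mul_le_mul_of_nonneg_left hsum_sqrt (Real.sqrt_nonneg _)) (sq_nonneg _)
  -- put everything together
  rw [hPhi, norm_mul]
  have habs1 : ‖1 / (n : ℂ)‖ = 1 / (n : ℝ) := by
    rw [norm_div]
    simp
  rw [habs1]
  have htr := abs_trace_mul_le (R' * (A * R)) Dc
  calc (1 / (n : ℝ)) * ‖((R' * (A * R)) * Dc).trace‖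
      ≤ (1 / (n : ℝ)) * (Real.sqrt (fsq (R' * (A * R))) * Real.sqrt (fsq Dc)) :=
        mul_le_mul_of_nonneg_left htr (by positivity)
    _ ≤ (1 / (n : ℝ)) * ((Real.sqrt ((L : ℝ) * n) * ((1 / z.im) * (1 * (1 / z.im)))) *
          ((opNormR V) ^ 2 * (Real.sqrt (mx / n) * ∑ l, frobNorm (W l - W' l)))) := by
        refine mul_le_mul_of_nonneg_left ?_ (by positivity)
        exact mul_le_mul hsX hsD (Real.sqrt_nonneg _) (by positivity)
    _ = opNormR V ^ 2 * Real.sqrt ((L : ℝ) * mx) / (n * z.im ^ 2) *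
          ∑ l, frobNorm (W l - W' l) := by
        have hkey : Real.sqrt ((L : ℝ) * n) * Real.sqrt (mx / n)
            = Real.sqrt ((L : ℝ) * mx) := by
          rw [← Real.sqrt_mul (by positivity)]
          congr 1
          field_simp
        rw [← hkey]
        have hzne : z.im ≠ 0 := ne_of_gt hz
        have hnne : (n : ℝ) ≠ 0 := ne_of_gt hnR
        field_simp
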